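/- Let α ≥ 5. Then for all x ∈ (0, 1/2]: 1 + (1+x)^α − (1−x)^{(1−α)/2} − (1+x)^{(1+α)/2} ≥ ((α−1)²/4) x². -/

import Mathlib

open Real Set

set_option maxHeartbeats 2000000

private lemma exists_sq {n : ℝ} (hn : 0 ≤ n) : ∃ a : ℝ, n = a ^ 2 :=
  ⟨Real.sqrt n, (Real.sq_sqrt hn).symm⟩

private lemma certA (n y z : ℝ) (hn : 0 ≤ n) (hy : 0 ≤ y) (hz : 0 ≤ z) :
    0 ≤ (10546875/512:ℝ) * z ^ 8 + (48671875/256:ℝ) * y ^ 1 * z ^ 7 + (23859375/32:ℝ) * y ^ 2 * z ^ 6 + (412978125/256:ℝ) * y ^ 3 * z ^ 5 + (534290625/256:ℝ) * y ^ 4 * z ^ 4 + (416888125/256:ℝ) * y ^ 5 * z ^ 3 + (11640825/16:ℝ) * y ^ 6 * z ^ 2 + (40891475/256:ℝ) * y ^ 7 * z ^ 1 + (5480435/512:ℝ) * y ^ 8 + (37890625/1024:ℝ) * n ^ 1 * z ^ 8 + (183671875/512:ℝ) * n ^ 1 * y ^ 1 * z ^ 7 + (756390625/512:ℝ) * n ^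 1 * y ^ 2 * z ^ 6 + (1721859375/512:ℝ) * n ^ 1 * y ^ 3 * z ^ 5 + (1178323125/256:ℝ) * n ^ 1 * y ^ 4 * z ^ 4 + (1968599625/512:ℝ) * n ^ 1 * y ^ 5 * z ^ 3 + (966328375/512:ℝ) * n ^ 1 * y ^ 6 * z ^ 2 + (248585285/512:ℝ) * n ^ 1 * y ^ 7 * z ^ 1 + (48846523/1024:ℝ) * n ^ 1 * y ^ 8 + (21484375/1024:ℝ) * n ^ 2 * z ^ 8 + (56171875/256:ℝ) * n ^ 2 * y ^ 1 * z ^ 7 + (989359375/1024:ℝ) * n ^ 2 * y ^ 2 * z ^ 6 + (1196540625/512:ℝ) * n ^ 2 * y ^ 3 * z ^ 5 + (3467169375/1024:ℝ) * n ^ 2 * y ^ 4 * z ^ 4 + (382932625/128:ℝ) * n ^ 2 * y ^ 5 * z ^ 3 + (1596609625/1024:ℝ) * n ^ 2 * y ^ 6 * z ^ 2 + (220935765/512:ℝ) * n ^ 2 * y ^ 7 * z ^ 1 + (24262369/512:ℝ) * n ^ 2 * y ^ 8 + (1953125/512:ℝ) * n ^ 3 * z ^ 8 + (24609375/512:ℝ)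 * n ^ 3 * y ^ 1 * z ^ 7 + (249046875/1024:ℝ) * n ^ 3 * y ^ 2 * z ^ 6 + (167928125/256:ℝ) * n ^ 3 * y ^ 3 * z ^ 5 + (1063070625/1024:ℝ) * n ^ 3 * y ^ 4 * z ^ 4 + (505494375/512:ℝ) * n ^ 3 * y ^ 5 * z ^ 3 + (561129925/1024:ℝ) * n ^ 3 * y ^ 6 * z ^ 2 + (5136175/32:ℝ) * n ^ 3 * y ^ 7 * z ^ 1 + (19157333/1024:ℝ) * n ^ 3 * y ^ 8 + (546875/256:ℝ) * n ^ 4 * y ^ 1 * z ^ 7 + (4859375/256:ℝ) * n ^ 4 * y ^ 2 * z ^ 6 + (35234375/512:ℝ) * n ^ 4 * y ^ 3 * z ^ 5 + (134981875/1024:ℝ) * n ^ 4 * y ^ 4 * z ^ 4 + (4586125/32:ℝ) * n ^ 4 * y ^ 5 * z ^ 3 + (44841175/512:ℝ) * n ^ 4 * y ^ 6 * z ^ 2 + (14060355/512:ℝ) * n ^ 4 * y ^ 7 * z ^ 1 + (3445651/1024:ℝ) * n ^ 4 * y ^ 8 + (109375/256:ℝ) * n ^ 5 * y ^ 2 * z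 ^ 6 + (1453125/512:ℝ) * n ^ 5 * y ^ 3 * z ^ 5 + (3843125/512:ℝ) * n ^ 5 * y ^ 4 * z ^ 4 + (2563375/256:ℝ) * n ^ 5 * y ^ 5 * z ^ 3 + (896325/128:ℝ) * n ^ 5 * y ^ 6 * z ^ 2 + (1223645/512:ℝ) * n ^ 5 * y ^ 7 * z ^ 1 + (158201/512:ℝ) * n ^ 5 * y ^ 8 + (9375/256:ℝ) * n ^ 6 * y ^ 3 * z ^ 5 + (183125/1024:ℝ) * n ^ 6 * y ^ 4 * z ^ 4 + (41875/128:ℝ) * n ^ 6 * y ^ 5 * z ^ 3 + (140575/512:ℝ) * n ^ 6 * y ^ 6 * z ^ 2 + (26395/256:ℝ) * n ^ 6 * y ^ 7 * z ^ 1 + (14333/1024:ℝ) * n ^ 6 * y ^ 8 + (625/512:ℝ) * n ^ 7 * y ^ 4 * z ^ 4 + (125/32:ℝ) * n ^ 7 * y ^ 5 * z ^ 3 + (1075/256:ℝ) * n ^ 7 * y ^ 6 * z ^ 2 + (55/32:ℝ) * n ^ 7 * y ^ 7 * z ^ 1 + (121/512:ℝ) * n ^ 7 * y ^ 8 := by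
  obtain ⟨a, rfl⟩ := exists_sq hn
  obtain ⟨b, rfl⟩ := exists_sq hy
  obtain ⟨c, rfl⟩ := exists_sq hz
  positivity

private lemma certA2 (n y z : ℝ) (hn : 0 ≤ n) (hy : 0 ≤ y) (hz : 0 ≤ z) :
    0 ≤ (1171875/256:ℝ) * z ^ 8 + (6640625/128:ℝ) * y ^ 1 * z ^ 7 + (62703125/256:ℝ) * y ^ 2 * z ^ 6 + (631250:ℝ) * y ^ 3 * z ^ 5 + (248493125/256:ℝ) * y ^ 4 * z ^ 4 + (116231125/128:ℝ) * y ^ 5 * z ^ 3 + (128108075/256:ℝ) * y ^ 6 * z ^ 2 + (9371125/64:ℝ) * y ^ 7 * z ^ 1 + (544695/32:ℝ) * y ^ 8 + (390625/256:ℝ) * n ^ 1 * z ^ 8 + (1640625/64:ℝ) * n ^ 1 * y ^ 1 * z ^ 7 + (39078125/256:ℝ) * n ^ 1 * y ^ 2 * z ^ 6 + (58990625/128:ℝ) * n ^ 1 * y ^ 3 * z ^ 5 + (203640625/256:ℝ) * n ^ 1 * y ^ 4 * z ^ 4 + (811625:ℝ) * n ^ 1 * y ^ 5 * z ^ 3 +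 (122178675/256:ℝ) * n ^ 1 * y ^ 6 * z ^ 2 + (18723245/128:ℝ) * n ^ 1 * y ^ 7 * z ^ 1 + (2245047/128:ℝ) * n ^ 1 * y ^ 8 + (390625/128:ℝ) * n ^ 2 * y ^ 1 * z ^ 7 + (7515625/256:ℝ) * n ^ 2 * y ^ 2 * z ^ 6 + (7303125/64:ℝ) * n ^ 2 * y ^ 3 * z ^ 5 + (59505625/256:ℝ) * n ^ 2 * y ^ 4 * z ^ 4 + (34156625/128:ℝ) * n ^ 2 * y ^ 5 * z ^ 3 + (43783075/256:ℝ) * n ^ 2 * y ^ 6 * z ^ 2 + (1785805/32:ℝ) * n ^ 2 * y ^ 7 * z ^ 1 + (1798875/256:ℝ) * n ^ 2 * y ^ 8 + (328125/256:ℝ) * n ^ 3 * y ^ 2 * z ^ 6 + (1153125/128:ℝ) * n ^ 3 * y ^ 3 * z ^ 5 + (6406875/256:ℝ) * n ^ 3 * y ^ 4 * z ^ 4 + (2232375/64:ℝ) * n ^ 3 * y ^ 5 * z ^ 3 + (6497875/256:ℝ) * n ^ 3 * y ^ 6 * z ^ 2 + (1149405/128:ℝ) * n ^ 3 * y ^ 7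 * z ^ 1 + (305653/256:ℝ) * n ^ 3 * y ^ 8 + (3125/16:ℝ) * n ^ 4 * y ^ 3 * z ^ 5 + (125625/128:ℝ) * n ^ 4 * y ^ 4 * z ^ 4 + (7375/4:ℝ) * n ^ 4 * y ^ 5 * z ^ 3 + (101675/64:ℝ) * n ^ 4 * y ^ 6 * z ^ 2 + (9815/16:ℝ) * n ^ 4 * y ^ 7 * z ^ 1 + (10945/128:ℝ) * n ^ 4 * y ^ 8 + (625/64:ℝ) * n ^ 5 * y ^ 4 * z ^ 4 + (125/4:ℝ) * n ^ 5 * y ^ 5 * z ^ 3 + (1075/32:ℝ) * n ^ 5 * y ^ 6 * z ^ 2 + (55/4:ℝ) * n ^ 5 * y ^ 7 * z ^ 1 + (121/64:ℝ) * n ^ 5 * y ^ 8 := by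
  obtain ⟨a, rfl⟩ := exists_sq hn
  obtain ⟨b, rfl⟩ := exists_sq hy
  obtain ⟨c, rfl⟩ := exists_sq hz
  positivity

private lemma certB1 (n w z : ℝ) (hn : 0 ≤ n) (hw : 0 ≤ w) (hz : 0 ≤ z) :
    0 ≤ (1606976:ℝ) * z ^ 6 + (10307680:ℝ) * w ^ 1 * z ^ 5 + (27287200:ℝ) * w ^ 2 * z ^ 4 + (38154000:ℝ) * w ^ 3 * z ^ 3 + (29705000:ℝ) * w ^ 4 * z ^ 2 + (12200000:ℝ) * w ^ 5 * z ^ 1 + (2062500:ℝ) * w ^ 6 + (1719424:ℝ) * n ^ 1 * z ^ 6 + (10776480:ℝ) * n ^ 1 * w ^ 1 * z ^ 5 + (27948800:ℝ) * n ^ 1 * w ^ 2 * z ^ 4 + (38358000:ℝ) * n ^ 1 * w ^ 3 * z ^ 3 + (29347500:ℝ) * n ^ 1 * w ^ 4 * z ^ 2 + (11850000:ℝ) * n ^ 1 * w ^ 5 * z ^ 1 + (1968750:ℝ) * n ^ 1 * w ^ 6 + (347392:ℝ) * n ^ 2 * z ^ 6 + (2189120:ℝ) * n ^ 2 * w ^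 1 * z ^ 5 + (5695600:ℝ) * n ^ 2 * w ^ 2 * z ^ 4 + (7819500:ℝ) * n ^ 2 * w ^ 3 * z ^ 3 + (5962500:ℝ) * n ^ 2 * w ^ 4 * z ^ 2 + (2387500:ℝ) * n ^ 2 * w ^ 5 * z ^ 1 + (390625:ℝ) * n ^ 2 * w ^ 6 + (19712:ℝ) * n ^ 3 * z ^ 6 + (126400:ℝ) * n ^ 3 * w ^ 1 * z ^ 5 + (334000:ℝ) * n ^ 3 * w ^ 2 * z ^ 4 + (464500:ℝ) * n ^ 3 * w ^ 3 * z ^ 3 + (357500:ℝ) * n ^ 3 * w ^ 4 * z ^ 2 + (143750:ℝ) * n ^ 3 * w ^ 5 * z ^ 1 + (46875/2:ℝ) * n ^ 3 * w ^ 6 := by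
  obtain ⟨a, rfl⟩ := exists_sq hn
  obtain ⟨b, rfl⟩ := exists_sq hw
  obtain ⟨c, rfl⟩ := exists_sq hz
  positivity

private lemma certB2 (n w z : ℝ) (hn : 0 ≤ n) (hw : 0 ≤ w) (hz : 0 ≤ z) :
    0 ≤ (20661248:ℝ) * z ^ 8 + (175692800:ℝ) * w ^ 1 * z ^ 7 + (646740800:ℝ) * w ^ 2 * z ^ 6 + (1343748000:ℝ) * w ^ 3 * z ^ 5 + (1719520000:ℝ) * w ^ 4 * z ^ 4 + (1383075000:ℝ) * w ^ 5 * z ^ 3 + (679500000:ℝ) * w ^ 6 * z ^ 2 + (185000000:ℝ) * w ^ 7 * z ^ 1 + (21093750:ℝ) * w ^ 8 + (56161280:ℝ) * n ^ 1 * z ^ 8 + (485263360:ℝ) * n ^ 1 * w ^ 1 * z ^ 7 + (1822875200:ℝ) * n ^ 1 * w ^ 2 * z ^ 6 + (3885580000:ℝ) * n ^ 1 * w ^ 3 * z ^ 5 + (5135860000:ℝ) * n ^ 1 * w ^ 4 * z ^ 4 + (4305725000:ℝ) * n ^ 1 * w ^ 5 * z ^ 3 + (2232687500:ℝ) * n ^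 1 * w ^ 6 * z ^ 2 + (653437500:ℝ) * n ^ 1 * w ^ 7 * z ^ 1 + (82421875:ℝ) * n ^ 1 * w ^ 8 + (41821440:ℝ) * n ^ 2 * z ^ 8 + (363614720:ℝ) * n ^ 2 * w ^ 1 * z ^ 7 + (1375952400:ℝ) * n ^ 2 * w ^ 2 * z ^ 6 + (2958271000:ℝ) * n ^ 2 * w ^ 3 * z ^ 5 + (3949865000:ℝ) * n ^ 2 * w ^ 4 * z ^ 4 + (3351112500:ℝ) * n ^ 2 * w ^ 5 * z ^ 3 + (1762468750:ℝ) * n ^ 2 * w ^ 6 * z ^ 2 + (524687500:ℝ) * n ^ 2 * w ^ 7 * z ^ 1 + (67578125:ℝ) * n ^ 2 * w ^ 8 + (11788800:ℝ) * n ^ 3 * z ^ 8 + (102919040:ℝ) * n ^ 3 * w ^ 1 * z ^ 7 + (391112800:ℝ) * n ^ 3 * w ^ 2 * z ^ 6 + (844561000:ℝ) * n ^ 3 * w ^ 3 * z ^ 5 + (1132680000:ℝ) * n ^ 3 * w ^ 4 * z ^ 4 + (965312500:ℝ) * n ^ 3 * w ^ 5 * z ^ 3 + (509984375:ℝ) *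 n ^ 3 * w ^ 6 * z ^ 2 + (152500000:ℝ) * n ^ 3 * w ^ 7 * z ^ 1 + (39453125/2:ℝ) * n ^ 3 * w ^ 8 + (1246720:ℝ) * n ^ 4 * z ^ 8 + (10935680:ℝ) * n ^ 4 * w ^ 1 * z ^ 7 + (41729600:ℝ) * n ^ 4 * w ^ 2 * z ^ 6 + (90414000:ℝ) * n ^ 4 * w ^ 3 * z ^ 5 + (121548750:ℝ) * n ^ 4 * w ^ 4 * z ^ 4 + (207409375/2:ℝ) * n ^ 4 * w ^ 5 * z ^ 3 + (109515625/2:ℝ) * n ^ 4 * w ^ 6 * z ^ 2 + (16328125:ℝ) * n ^ 4 * w ^ 7 * z ^ 1 + (16796875/8:ℝ) * n ^ 4 * w ^ 8 + (39424:ℝ) * n ^ 5 * z ^ 8 + (351360:ℝ) * n ^ 5 * w ^ 1 * z ^ 7 + (1361600:ℝ) * n ^ 5 * w ^ 2 * z ^ 6 + (2994000:ℝ) * n ^ 5 * w ^ 3 * z ^ 5 + (4081250:ℝ) * n ^ 5 * w ^ 4 * z ^ 4 + (7053125/2:ℝ) * n ^ 5 * w ^ 5 * z ^ 3 + (3765625/2:ℝ)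 * n ^ 5 * w ^ 6 * z ^ 2 + (2265625/4:ℝ) * n ^ 5 * w ^ 7 * z ^ 1 + (1171875/16:ℝ) * n ^ 5 * w ^ 8 := by
  obtain ⟨a, rfl⟩ := exists_sq hn
  obtain ⟨b, rfl⟩ := exists_sq hw
  obtain ⟨c, rfl⟩ := exists_sq hz
  positivity

private lemma polyA (m y : ℝ) (hm : 2 ≤ m) (h0 : 0 ≤ y) (h1 : y ≤ 2/5) :
    0 ≤ (2*m+1)*(1+(m+1)/2*(y*(1-y-y^2)))^2*(1+m/2*y)^4
        - m*(1+y)^2*(1+m/2*y)^4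
        - (m+1)*(1+(m+1)/2*(y*(1-y-y^2)))^2*(1+m/2*y)^2
        - 2*m^2*y*(1+(m+1)/2*(y*(1-y-y^2)))^2 := by
  have h := certA (m-2) y (2/5-y) (by linarith) h0 (by linarith)
  have h2 := mul_nonneg (sq_nonneg y) h
  nlinarith [h2]

private lemma polyA2 (m y : ℝ) (hm : 2 ≤ m) (h0 : 0 ≤ y) (h1 : y ≤ 2/5) :
    0 ≤ 2*(1+m/2*y)^2*((2*m+1)*(1+(m+1)/2*(y*(1-y-y^2)))^2 - m*(1+y)^2)
        - (m+1)*(1+(m+1)/2*(y*(1-y-y^2)))^2 := by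
  have h := certA2 (m-2) y (2/5-y) (by linarith) h0 (by linarith)
  nlinarith [h]

private lemma polyB1 (m x : ℝ) (hm : 2 ≤ m) (h0 : 2/5 ≤ x) (h1 : x ≤ 1/2) :
    0 ≤ 2*(1+m/2*x)^2*((1+x)*(1+m*(x*(1-x-x^2)))-1) - (1+x)*(1+m*(x*(1-x-x^2))) := by
  have h := certB1 (m-2) (x-2/5) (1/2-x) (by linarith) (by linarith) (by linarith)
  nlinarith [h]

private lemma polyB2 (m x : ℝ) (hm : 2 ≤ m) (h0 : 2/5 ≤ x) (h1 : x ≤ 1/2) :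
    0 ≤ ((1+x)*(1+m*(x*(1-x-x^2)))-1)*(1+m/2*x)^4
        - (1+x)*(1+m*(x*(1-x-x^2)))*(1+m/2*x)^2
        + (1+m*(x*(1-x-x^2)))*(1-m^2*x^2) := by
  have h := certB2 (m-2) (x-2/5) (1/2-x) (by linarith) (by linarith) (by linarith)
  nlinarith [h]

private lemma derivA (m y : ℝ) (hm : 2 ≤ m) (h0 : 0 ≤ y) (h1 : y ≤ 2/5) :
    m * (1-y) ^ (-m-1) + (m+1) * (1+y) ^ m + 2*m^2*y ≤ (2*m+1) * (1+y) ^ (2*m) := by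
  have hy1 : (0:ℝ) < 1 + y := by linarith
  have hy2 : (0:ℝ) < 1 - y := by linarith
  have hcn : 0 ≤ y*(1-y-y^2) := by nlinarith
  have h1v : (0:ℝ) < 1 + y*(1-y-y^2) := by nlinarith
  set u : ℝ := (1+y) ^ (m/2) with hu_def
  set v : ℝ := (1+y*(1-y-y^2)) ^ ((m+1)/2) with hv_def
  have hu : 1 + m/2*y ≤ u :=
    one_add_mul_self_le_rpow_one_add (by linarith) (by linarith)
  have hv : 1 + (m+1)/2*(y*(1-y-y^2)) ≤ v :=
    one_add_mul_self_le_rpow_one_add (by linarith) (by linarith)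
  have hP1 : (1:ℝ) ≤ 1 + m/2*y := by nlinarith
  have hQ1 : (1:ℝ) ≤ 1 + (m+1)/2*(y*(1-y-y^2)) := by nlinarith
  have hu0 : (0:ℝ) < u := Real.rpow_pos_of_pos hy1 _
  have hv0 : (0:ℝ) < v := Real.rpow_pos_of_pos h1v _
  have e1 : (1+y) ^ (2*m) = u^4 := by
    rw [hu_def, ← Real.rpow_natCast ((1+y) ^ (m/2)) 4, ← Real.rpow_mul hy1.le]
    congr 1
    push_cast
    ring
  have e2 : (1+y) ^ m = u^2 := by
    rw [hu_def, ← Real.rpow_natCast ((1+y) ^ (m/2)) 2, ← Real.rpow_mul hy1.le]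
    congr 1
    push_cast
    ring
  have ev : v^2 = (1+y*(1-y-y^2)) ^ (m+1) := by
    rw [hv_def, ← Real.rpow_natCast ((1+y*(1-y-y^2)) ^ ((m+1)/2)) 2,
      ← Real.rpow_mul h1v.le]
    congr 1
    push_cast
    ring
  have e3 : (1-y) ^ (-m-1) * v^2 = u^4 * (1+y)^2 := by
    have efac : 1 + y*(1-y-y^2) = (1+y)^2 * (1-y) := by ring
    have h2 : ((1+y):ℝ)^(2:ℕ) = (1+y) ^ ((2:ℕ):ℝ) := (Real.rpow_natCast _ 2).symm
    have hne : ((1-y):ℝ) ^ (m+1) ≠ 0 := (Real.rpow_pos_of_pos hy2 _).ne'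
    rw [ev, efac, Real.mul_rpow (by positivity) hy2.le,
      show (-m-1 : ℝ) = -(m+1) by ring, Real.rpow_neg hy2.le]
    rw [← e1]
    field_simp
    rw [h2, ← Real.rpow_mul hy1.le, ← Real.rpow_add hy1]
    congr 1
    push_cast
    ring
  set B : ℝ := (1-y) ^ (-m-1) with hB_def
  have hB0 : (0:ℝ) < B := Real.rpow_pos_of_pos hy2 _
  have hA := polyA m y hm h0 h1
  have hA2 := polyA2 m y hm h0 h1
  have t1 : 0 ≤ u^2 - (1+m/2*y)^2 := by nlinarith [hu, hP1]
  have t2 : 0 ≤ v^2 - (1+(m+1)/2*(y*(1-y-y^2)))^2 := by nlinarith [hv, hQ1]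
  have hy49 : (1+y)^2 ≤ 49/25 := by nlinarith
  have hX : 0 ≤ (2*m+1)*(1+(m+1)/2*(y*(1-y-y^2)))^2 - m*(1+y)^2 := by
    have k1 := mul_nonneg (show (0:ℝ) ≤ 2*m+1 by linarith)
        (show 0 ≤ (1+(m+1)/2*(y*(1-y-y^2)))^2 - 1 by nlinarith [hQ1])
    have k2 := mul_nonneg (show (0:ℝ) ≤ m by linarith)
        (show 0 ≤ 49/25 - (1+y)^2 by linarith)
    linarith [k1, k2]
  have hBr2 : 0 ≤ ((2*m+1)*(1+(m+1)/2*(y*(1-y-y^2)))^2 - m*(1+y)^2)*(u^2+(1+m/2*y)^2)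
      - (m+1)*(1+(m+1)/2*(y*(1-y-y^2)))^2 := by
    have hprod := mul_nonneg hX t1
    have hid : ((2*m+1)*(1+(m+1)/2*(y*(1-y-y^2)))^2 - m*(1+y)^2)*(u^2+(1+m/2*y)^2)
        - (m+1)*(1+(m+1)/2*(y*(1-y-y^2)))^2
        = (2*(1+m/2*y)^2*((2*m+1)*(1+(m+1)/2*(y*(1-y-y^2)))^2 - m*(1+y)^2)
            - (m+1)*(1+(m+1)/2*(y*(1-y-y^2)))^2)
          + ((2*m+1)*(1+(m+1)/2*(y*(1-y-y^2)))^2 - m*(1+y)^2)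
            * (u^2 - (1+m/2*y)^2) := by ring
    rw [hid]
    linarith [hA2, hprod]
  have hu1 : (1:ℝ) ≤ u := le_trans hP1 hu
  have h2my : 2*m*y ≤ u^2 := by
    have := sq_nonneg (1 - m/2*y)
    nlinarith [t1, this]
  have hu21 : 0 ≤ u^2 - 1 := by nlinarith [hu1]
  have hBr3 : 0 ≤ (2*m+1)*u^4 - (m+1)*u^2 - 2*m^2*y := by
    have k1 := mul_nonneg (mul_nonneg (show (0:ℝ) ≤ 2*m+1 by linarith) (sq_nonneg u)) hu21
    have k2 := mul_nonneg (show (0:ℝ) ≤ m by linarith) (show 0 ≤ u^2 - 2*m*y by linarith)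
    linarith [k1, k2]
  have key : 0 ≤ (2*m+1)*u^4*v^2 - m*(1+y)^2*u^4 - ((m+1)*u^2 + 2*m^2*y)*v^2 := by
    have k1 := mul_nonneg t1 hBr2
    have k2 := mul_nonneg t2 hBr3
    have hid : (2*m+1)*u^4*v^2 - m*(1+y)^2*u^4 - ((m+1)*u^2 + 2*m^2*y)*v^2
        = ((2*m+1)*(1+(m+1)/2*(y*(1-y-y^2)))^2*(1+m/2*y)^4
            - m*(1+y)^2*(1+m/2*y)^4
            - (m+1)*(1+(m+1)/2*(y*(1-y-y^2)))^2*(1+m/2*y)^2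
            - 2*m^2*y*(1+(m+1)/2*(y*(1-y-y^2)))^2)
          + (u^2 - (1+m/2*y)^2) *
            (((2*m+1)*(1+(m+1)/2*(y*(1-y-y^2)))^2 - m*(1+y)^2)*(u^2+(1+m/2*y)^2)
              - (m+1)*(1+(m+1)/2*(y*(1-y-y^2)))^2)
          + (v^2 - (1+(m+1)/2*(y*(1-y-y^2)))^2) *
            ((2*m+1)*u^4 - (m+1)*u^2 - 2*m^2*y) := by ring
    rw [hid]
    have := add_nonneg (add_nonneg hA k1) k2
    linarith
  have e3m : m * (B * v^2) = m * (u^4 * (1+y)^2) := by rw [e3]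
  have h5 : 0 ≤ ((2*m+1)*u^4 - (m+1)*u^2 - 2*m^2*y - m*B) * v^2 := by
    have hid : ((2*m+1)*u^4 - (m+1)*u^2 - 2*m^2*y - m*B) * v^2
        = ((2*m+1)*u^4*v^2 - m*(1+y)^2*u^4 - ((m+1)*u^2 + 2*m^2*y)*v^2)
          + (m * (u^4 * (1+y)^2) - m * (B * v^2)) := by ring
    rw [hid, e3m]
    linarith [key]
  have h6 : 0 ≤ (2*m+1)*u^4 - (m+1)*u^2 - 2*m^2*y - m*B := by
    by_contra hcon
    push_neg at hcon
    linarith [h5, mul_pos (neg_pos.mpr hcon) (pow_pos hv0 2)]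
  rw [e1, e2]
  linarith [h6]

private lemma caseB (m x : ℝ) (hm : 2 ≤ m) (h0 : 2/5 ≤ x) (h1 : x ≤ 1/2) :
    m^2*x^2 ≤ 1 + (1+x) ^ (2*m+1) - (1-x) ^ (-m) - (1+x) ^ (m+1) := by
  have hx1 : (0:ℝ) < 1 + x := by linarith
  have hx2 : (0:ℝ) < 1 - x := by linarith
  have hcn : 0 ≤ x*(1-x-x^2) := by nlinarith
  have h1v : (0:ℝ) < 1 + x*(1-x-x^2) := by nlinarith
  set u : ℝ := (1+x) ^ (m/2) with hu_def
  set W : ℝ := (1+x*(1-x-x^2)) ^ m with hW_def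
  have hu : 1 + m/2*x ≤ u :=
    one_add_mul_self_le_rpow_one_add (by linarith) (by linarith)
  have hW : 1 + m*(x*(1-x-x^2)) ≤ W :=
    one_add_mul_self_le_rpow_one_add (by linarith) (by linarith)
  have hu0 : (0:ℝ) < u := Real.rpow_pos_of_pos hx1 _
  have hW0 : (0:ℝ) < W := Real.rpow_pos_of_pos h1v _
  have e1 : (1+x) ^ (2*m) = u^4 := by
    rw [hu_def, ← Real.rpow_natCast ((1+x) ^ (m/2)) 4, ← Real.rpow_mul hx1.le]
    congr 1
    push_cast
    ring
  have e2 : (1+x) ^ m = u^2 := by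
    rw [hu_def, ← Real.rpow_natCast ((1+x) ^ (m/2)) 2, ← Real.rpow_mul hx1.le]
    congr 1
    push_cast
    ring
  have ea : (1+x) ^ (2*m+1) = (1+x) * u^4 := by
    rw [Real.rpow_add hx1, Real.rpow_one, e1]; ring
  have eb : (1+x) ^ (m+1) = (1+x) * u^2 := by
    rw [Real.rpow_add hx1, Real.rpow_one, e2]; ring
  set B : ℝ := (1-x) ^ (-m) with hB_def
  have hB0 : (0:ℝ) < B := Real.rpow_pos_of_pos hx2 _
  have e3 : B * W = u^4 := by
    have efac : 1 + x*(1-x-x^2) = (1+x)^2 * (1-x) := by ring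
    have h2 : ((1+x):ℝ)^(2:ℕ) = (1+x) ^ ((2:ℕ):ℝ) := (Real.rpow_natCast _ 2).symm
    have hne : ((1-x):ℝ) ^ m ≠ 0 := (Real.rpow_pos_of_pos hx2 _).ne'
    rw [hB_def, hW_def, efac, Real.mul_rpow (by positivity) hx2.le,
      Real.rpow_neg hx2.le, ← e1]
    field_simp
    rw [h2, ← Real.rpow_mul hx1.le]
    all_goals norm_num
  have hP1 : (1:ℝ) ≤ 1 + m/2*x := by nlinarith
  have hD1 : (1:ℝ) ≤ 1 + m*(x*(1-x-x^2)) := by nlinarith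
  have hBD : B * (1+m*(x*(1-x-x^2))) ≤ u^4 := by
    calc B * (1+m*(x*(1-x-x^2))) ≤ B * W := by
          have k := mul_nonneg hB0.le (show 0 ≤ W - (1+m*(x*(1-x-x^2))) by linarith [hW])
          linarith [k]
    _ = u^4 := e3
  have hB1 := polyB1 m x hm h0 h1
  have hB2 := polyB2 m x hm h0 h1
  have t1 : 0 ≤ u^2 - (1+m/2*x)^2 := by nlinarith [hu, hP1]
  have ha : 0 ≤ (1+x)*(1+m*(x*(1-x-x^2))) - 1 := by nlinarith [hD1]
  have hbr : 0 ≤ ((1+x)*(1+m*(x*(1-x-x^2)))-1)*(u^2+(1+m/2*x)^2)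
      - (1+x)*(1+m*(x*(1-x-x^2))) := by
    have hprod := mul_nonneg ha t1
    have hid : ((1+x)*(1+m*(x*(1-x-x^2)))-1)*(u^2+(1+m/2*x)^2)
        - (1+x)*(1+m*(x*(1-x-x^2)))
        = (2*(1+m/2*x)^2*((1+x)*(1+m*(x*(1-x-x^2)))-1) - (1+x)*(1+m*(x*(1-x-x^2))))
          + ((1+x)*(1+m*(x*(1-x-x^2)))-1) * (u^2 - (1+m/2*x)^2) := by ring
    rw [hid]
    linarith [hB1, hprod]
  have keyB : 0 ≤ ((1+x)*(1+m*(x*(1-x-x^2)))-1)*u^4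
      - (1+x)*(1+m*(x*(1-x-x^2)))*u^2 + (1+m*(x*(1-x-x^2)))*(1-m^2*x^2) := by
    have k1 := mul_nonneg t1 hbr
    have hid : ((1+x)*(1+m*(x*(1-x-x^2)))-1)*u^4
        - (1+x)*(1+m*(x*(1-x-x^2)))*u^2 + (1+m*(x*(1-x-x^2)))*(1-m^2*x^2)
        = (((1+x)*(1+m*(x*(1-x-x^2)))-1)*(1+m/2*x)^4
            - (1+x)*(1+m*(x*(1-x-x^2)))*(1+m/2*x)^2
            + (1+m*(x*(1-x-x^2)))*(1-m^2*x^2))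
          + (u^2 - (1+m/2*x)^2) *
            (((1+x)*(1+m*(x*(1-x-x^2)))-1)*(u^2+(1+m/2*x)^2)
              - (1+x)*(1+m*(x*(1-x-x^2)))) := by ring
    rw [hid]
    linarith [hB2, k1]
  have h5 : 0 ≤ (1 + (1+x)*u^4 - B - (1+x)*u^2 - m^2*x^2) * (1+m*(x*(1-x-x^2))) := by
    have hid : (1 + (1+x)*u^4 - B - (1+x)*u^2 - m^2*x^2) * (1+m*(x*(1-x-x^2)))
        = (((1+x)*(1+m*(x*(1-x-x^2)))-1)*u^4
            - (1+x)*(1+m*(x*(1-x-x^2)))*u^2 + (1+m*(x*(1-x-x^2)))*(1-m^2*x^2))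
          + (u^4 - B * (1+m*(x*(1-x-x^2)))) := by ring
    rw [hid]
    linarith [keyB, hBD]
  have h6 : 0 ≤ 1 + (1+x)*u^4 - B - (1+x)*u^2 - m^2*x^2 := by
    by_contra hcon
    push_neg at hcon
    linarith [h5, mul_pos (neg_pos.mpr hcon) (show (0:ℝ) < 1+m*(x*(1-x-x^2)) by linarith)]
  rw [ea, eb]
  linarith [h6]

/-- Lemma 4.5: `g(x) ≥ ((α−1)²/4) x²` for `α ≥ 5` and `x ∈ (0, 1/2]`. -/
theorem g_lower_bound_large_alpha (α : ℝ) (hα : 5 ≤ α)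
    (x : ℝ) (hx : x ∈ Set.Ioc (0 : ℝ) (1 / 2)) :
    1 + (1 + x) ^ α - (1 - x) ^ ((1 - α) / 2) - (1 + x) ^ ((1 + α) / 2) ≥
      (α - 1) ^ 2 / 4 * x ^ 2 := by
  obtain ⟨hx0, hx12⟩ := hx
  obtain ⟨m, hm2, rfl⟩ : ∃ m : ℝ, 2 ≤ m ∧ α = 2*m+1 := ⟨(α-1)/2, by linarith, by ring⟩
  rw [ge_iff_le, show ((1-(2*m+1))/2 : ℝ) = -m by ring,
    show ((1+(2*m+1))/2 : ℝ) = m+1 by ring,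
    show ((2*m+1-1)^2/4 : ℝ) = m^2 by ring]
  rcases le_or_gt x (2/5) with hcase | hcase
  · -- monotonicity on [0, 2/5]
    set f : ℝ → ℝ := fun y => 1 + (1+y) ^ (2*m+1) - (1-y) ^ (-m) - (1+y) ^ (m+1) - m^2*y^2
      with hf_def
    have hder : ∀ y ∈ Set.Icc (0:ℝ) (2/5),
        HasDerivAt f ((2*m+1)*(1+y)^(2*m) - m*(1-y)^(-m-1) - (m+1)*(1+y)^m - m^2*(2*y)) y := by
      intro y hy
      obtain ⟨hy0, hy25⟩ := hy
      have hy1 : (0:ℝ) < 1 + y := by linarith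
      have hy2 : (0:ℝ) < 1 - y := by linarith
      have bp : HasDerivAt (fun z : ℝ => 1 + z) 1 y := by
        simpa using (hasDerivAt_id y).const_add (1:ℝ)
      have bm : HasDerivAt (fun z : ℝ => 1 - z) (-1) y := by
        simpa using (hasDerivAt_id y).const_sub (1:ℝ)
      have d1 : HasDerivAt (fun z : ℝ => (1+z) ^ (2*m+1)) (1*(2*m+1)*(1+y)^(2*m+1-1)) y :=
        bp.rpow_const (Or.inl hy1.ne')
      have d2 : HasDerivAt (fun z : ℝ => (1-z) ^ (-m)) (-1*(-m)*(1-y)^(-m-1)) y :=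
        bm.rpow_const (Or.inl hy2.ne')
      have d3 : HasDerivAt (fun z : ℝ => (1+z) ^ (m+1)) (1*(m+1)*(1+y)^(m+1-1)) y :=
        bp.rpow_const (Or.inl hy1.ne')
      have d4 : HasDerivAt (fun z : ℝ => m^2*z^2) (m^2*(2*y)) y := by
        have h := (hasDerivAt_pow 2 y).const_mul (m^2)
        refine h.congr_deriv ?_
        push_cast
        ring
      have dd := (((d1.const_add 1).sub d2).sub d3).sub d4
      refine dd.congr_deriv ?_
      rw [show (2*m+1-1 : ℝ) = 2*m by ring, show (m+1-1 : ℝ) = m by ring]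
      ring
    have hmono : MonotoneOn f (Set.Icc 0 (2/5)) := by
      apply monotoneOn_of_deriv_nonneg (convex_Icc _ _)
      · intro y hy
        exact ((hder y hy).continuousAt).continuousWithinAt
      · intro y hy
        rw [interior_Icc] at hy
        exact ((hder y (Ioo_subset_Icc_self hy)).differentiableAt).differentiableWithinAt
      · intro y hy
        rw [interior_Icc] at hy
        rw [(hder y (Ioo_subset_Icc_self hy)).deriv]
        have := derivA m y hm2 hy.1.le hy.2.le
        linarith
    have hf0 : f 0 = 0 := by
      simp [hf_def, Real.one_rpow]
    have hfx := hmono (Set.mem_Icc.mpr ⟨le_refl 0, by norm_num⟩)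
      (Set.mem_Icc.mpr ⟨hx0.le, hcase⟩) hx0.le
    rw [hf0] at hfx
    simp only [hf_def] at hfx
    linarith
  · have := caseB m x hm2 hcase.le hx12
    linarith
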